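/- For an irreducible discrete-time birth-and-death chain on {0,...,n} with stationary pmf π and birth probability p_i from state i, the expected hitting time of state n starting from state 0 equals Σ_{i=0}^{n−1} (1/(π_i p_i)) Σ_{k=0}^{i} π_k. -/

import Mathlib

open Finset

def vx {n : ℕ} (f : Fin (n + 1) → ℝ) (a : ℕ) : ℝ :=
  if ha : a ≤ n then f ⟨a, Nat.lt_succ_of_le ha⟩ else 0

def Kx {n : ℕ} (K : Matrix (Fin (n + 1)) (Fin (n + 1)) ℝ) (a b : ℕ) : ℝ :=
  if hab : a ≤ n ∧ b ≤ n then K ⟨a, Nat.lt_succ_of_le hab.1⟩ ⟨b, Nat.lt_succ_of_le hab.2⟩ else 0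

lemma vx_eq {n : ℕ} (f : Fin (n + 1) → ℝ) (i : Fin (n + 1)) : vx f i = f i := by
  simp [vx, Nat.lt_succ_iff.mp i.isLt]

lemma vx_eq' {n : ℕ} (f : Fin (n + 1) → ℝ) {a : ℕ} (ha : a ≤ n) :
    vx f a = f ⟨a, Nat.lt_succ_of_le ha⟩ := dif_pos ha

lemma vx_guard {n : ℕ} (f : Fin (n + 1) → ℝ) {a : ℕ} (ha : n < a) : vx f a = 0 :=
  dif_neg (by omega)

lemma sum_vx {n : ℕ} (f : Fin (n + 1) → ℝ) :
    ∑ a ∈ Finset.range (n + 1), vx f a = ∑ i, f i := by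
  rw [← Fin.sum_univ_eq_sum_range]
  exact Finset.sum_congr rfl fun i _ => vx_eq f i

lemma supp3 {n : ℕ} (f : ℕ → ℝ) (a : ℕ) (ha : a ≤ n)
    (h0 : ∀ b, a + 1 < b ∨ b + 1 < a → f b = 0) (hn : ∀ b, n < b → f b = 0) :
    ∑ b ∈ Finset.range (n + 1), f b = (if a = 0 then 0 else f (a - 1)) + f a + f (a + 1) := by
  have h1 : ∑ b ∈ Finset.range (n + 1), f b = ∑ b ∈ Finset.range (n + a + 2), f b :=
    Finset.sum_subset (by intro x hx; simp at hx ⊢; omega)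
      (fun x hx hnx => hn x (by simp at hx hnx; omega))
  have h2 : ∑ b ∈ ({a - 1, a, a + 1} : Finset ℕ), f b = ∑ b ∈ Finset.range (n + a + 2), f b :=
    Finset.sum_subset (by intro x hx; simp at hx ⊢; omega)
      (fun x hx hnx => h0 x (by simp at hx hnx; omega))
  rw [h1, ← h2]
  by_cases ha0 : a = 0
  · subst ha0
    rw [if_pos rfl]
    norm_num [Finset.sum_pair]
  · rw [if_neg ha0]
    rw [show ({a - 1, a, a + 1} : Finset ℕ) = insert (a-1) (insert a {a+1}) from rfl,
      Finset.sum_insert (by simp only [Finset.mem_insert, Finset.mem_singleton]; omega),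
      Finset.sum_insert (by simp only [Finset.mem_singleton]; omega),
      Finset.sum_singleton]
    ring

theorem stmt_16 {n : ℕ} (K : Matrix (Fin (n + 1)) (Fin (n + 1)) ℝ)
    (π : Fin (n + 1) → ℝ)
    (hnn : ∀ i j, 0 ≤ K i j) (hrow : ∀ i, ∑ j, K i j = 1)
    -- birth-and-death (tridiagonal) kernel:
    (htri : ∀ i j : Fin (n + 1), ((i : ℕ) + 1 < (j : ℕ) ∨ (j : ℕ) + 1 < (i : ℕ)) → K i j = 0)
    -- irreducibility: positive birth and death probabilities:
    (hbirth : ∀ i : Fin n, 0 < K i.castSucc i.succ)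
    (hdeath : ∀ i : Fin n, 0 < K i.succ i.castSucc)
    -- π is the stationary pmf:
    (hπpos : ∀ i, 0 < π i) (hπ1 : ∑ i, π i = 1)
    (hstat : ∀ j, ∑ i, π i * K i j = π j)
    -- h is the vector of expected hitting times of state n:
    (h : Fin (n + 1) → ℝ)
    (hlast : h (Fin.last n) = 0)
    (hsys : ∀ i : Fin (n + 1), i ≠ Fin.last n → h i = 1 + ∑ j, K i j * h j) :
    h 0 = ∑ i : Fin n,
      (1 / (π i.castSucc * K i.castSucc i.succ)) *
        ∑ k ∈ Finset.univ.filter (fun k : Fin (n + 1) => (k : ℕ) ≤ (i : ℕ)), π k := by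
  classical
  set π' : ℕ → ℝ := vx π with hπ'
  set h' : ℕ → ℝ := vx h with hh'
  set K' : ℕ → ℕ → ℝ := Kx K with hK'
  have htri' : ∀ a b : ℕ, a + 1 < b ∨ b + 1 < a → K' a b = 0 := by
    intro a b hab
    rw [hK']
    unfold Kx
    by_cases hg : a ≤ n ∧ b ≤ n
    · rw [dif_pos hg]; exact htri _ _ hab
    · rw [dif_neg hg]
  have hKguard : ∀ a b : ℕ, n < b → K' a b = 0 := by
    intro a b hab; rw [hK']; unfold Kx; rw [dif_neg (by omega)]
  -- pointwise translation lemmas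
  have hπK : ∀ (b : ℕ) (hb : b ≤ n) (a : ℕ), π' a * K' a b =
      vx (fun i => π i * K i ⟨b, Nat.lt_succ_of_le hb⟩) a := by
    intro b hb a
    rw [hπ', hK']
    by_cases ha : a ≤ n <;> simp [vx, Kx, ha, hb]
  have hKh : ∀ (a : ℕ) (ha : a ≤ n) (b : ℕ), K' a b * h' b =
      vx (fun j => K ⟨a, Nat.lt_succ_of_le ha⟩ j * h j) b := by
    intro a ha b
    rw [hh', hK']
    by_cases hb : b ≤ n <;> simp [vx, Kx, ha, hb]
  have hKv : ∀ (a : ℕ) (ha : a ≤ n) (b : ℕ), K' a b =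
      vx (fun j => K ⟨a, Nat.lt_succ_of_le ha⟩ j) b := by
    intro a ha b
    rw [hK']
    by_cases hb : b ≤ n <;> simp [vx, Kx, ha, hb]
  -- row sums
  have hrow' : ∀ a : ℕ, a ≤ n →
      (if a = 0 then 0 else K' a (a - 1)) + K' a a + K' a (a + 1) = 1 := by
    intro a ha
    rw [← supp3 (fun b => K' a b) a ha (fun b hb => htri' a b hb)
        (fun b hb => hKguard a b hb)]
    calc ∑ b ∈ Finset.range (n + 1), K' a b
        = ∑ b ∈ Finset.range (n + 1), vx (fun j => K ⟨a, Nat.lt_succ_of_le ha⟩ j) b :=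
          Finset.sum_congr rfl fun b _ => hKv a ha b
      _ = ∑ j, K ⟨a, Nat.lt_succ_of_le ha⟩ j := sum_vx _
      _ = 1 := hrow _
  -- stationarity
  have hstat' : ∀ b : ℕ, b ≤ n →
      (if b = 0 then 0 else π' (b - 1) * K' (b - 1) b) + π' b * K' b b
        + π' (b + 1) * K' (b + 1) b = π' b := by
    intro b hb
    rw [← supp3 (fun i => π' i * K' i b) b hb
        (fun i hi => by show π' i * K' i b = 0; rw [htri' i b (by omega)]; ring)
        (fun i hi => by show π' i * K' i b = 0; rw [hπ', vx_guard π hi]; ring)]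
    rw [hπ', vx_eq' π hb]
    calc ∑ i ∈ Finset.range (n + 1), π' i * K' i b
        = ∑ i ∈ Finset.range (n + 1), vx (fun i => π i * K i ⟨b, Nat.lt_succ_of_le hb⟩) i :=
          Finset.sum_congr rfl fun i _ => hπK b hb i
      _ = ∑ i, π i * K i ⟨b, Nat.lt_succ_of_le hb⟩ := sum_vx _
      _ = π ⟨b, Nat.lt_succ_of_le hb⟩ := hstat _
  -- hitting time system
  have hsys' : ∀ a : ℕ, a < n → h' a = 1 +
      ((if a = 0 then 0 else K' a (a - 1) * h' (a - 1)) + K' a a * h' a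
        + K' a (a + 1) * h' (a + 1)) := by
    intro a ha
    have han : a ≤ n := le_of_lt ha
    have hne : (⟨a, Nat.lt_succ_of_le han⟩ : Fin (n + 1)) ≠ Fin.last n := by
      simp [Fin.ext_iff, Fin.last]; omega
    have h1 := hsys ⟨a, Nat.lt_succ_of_le han⟩ hne
    rw [← supp3 (fun b => K' a b * h' b) a han
        (fun b hb => by show K' a b * h' b = 0; rw [htri' a b hb]; ring)
        (fun b hb => by show K' a b * h' b = 0; rw [hKguard a b hb]; ring)]
    rw [hh', vx_eq' h han]
    calc h ⟨a, Nat.lt_succ_of_le han⟩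
        = 1 + ∑ j, K ⟨a, Nat.lt_succ_of_le han⟩ j * h j := h1
      _ = 1 + ∑ b ∈ Finset.range (n + 1), vx (fun j => K ⟨a, Nat.lt_succ_of_le han⟩ j * h j) b :=
          by rw [sum_vx]
      _ = 1 + ∑ b ∈ Finset.range (n + 1), K' a b * h' b := by
          rw [Finset.sum_congr rfl fun b _ => (hKh a han b).symm]
  -- positivity
  have hbirth' : ∀ a : ℕ, a < n → 0 < K' a (a + 1) := by
    intro a ha
    rw [hK']
    unfold Kx
    rw [dif_pos ⟨by omega, by omega⟩]
    have := hbirth ⟨a, ha⟩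
    convert this using 2 <;> simp [Fin.ext_iff]
  have hπpos' : ∀ a : ℕ, a ≤ n → 0 < π' a := by
    intro a ha
    rw [hπ', vx_eq' π ha]
    exact hπpos _
  -- detailed balance
  have hDB : ∀ a : ℕ, a < n → π' a * K' a (a + 1) = π' (a + 1) * K' (a + 1) a := by
    intro a
    induction a with
    | zero =>
      intro ha
      have hs := hstat' 0 (by omega)
      have hr := hrow' 0 (by omega)
      norm_num at hs hr ⊢
      linear_combination π' 0 * hr - hs
    | succ a ih =>
      intro ha
      have hs := hstat' (a + 1) (by omega)
      have hr := hrow' (a + 1) (by omega)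
      have hih := ih (by omega)
      simp only [Nat.add_sub_cancel, if_neg (Nat.succ_ne_zero a)] at hs hr
      linear_combination π' (a + 1) * hr - hs + hih
  -- key recursion for expected crossing times
  have hd : ∀ a : ℕ, a < n →
      π' a * K' a (a + 1) * (h' a - h' (a + 1)) = ∑ k ∈ Finset.range (a + 1), π' k := by
    intro a
    induction a with
    | zero =>
      intro ha
      have hs := hsys' 0 ha
      have hr := hrow' 0 (by omega)
      norm_num at hs hr ⊢
      linear_combination π' 0 * hs + π' 0 * h' 0 * hr
    | succ a ih =>
      intro ha
      have hs := hsys' (a + 1) ha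
      have hr := hrow' (a + 1) (by omega)
      have hih := ih (by omega)
      have hdb := hDB a (by omega)
      simp only [Nat.add_sub_cancel, if_neg (Nat.succ_ne_zero a)] at hs hr
      have key : K' (a + 1) (a + 1 + 1) * (h' (a + 1) - h' (a + 1 + 1)) =
          1 + K' (a + 1) a * (h' a - h' (a + 1)) := by
        linear_combination hs + h' (a + 1) * hr
      rw [Finset.sum_range_succ, ← hih]
      calc π' (a + 1) * K' (a + 1) (a + 1 + 1) * (h' (a + 1) - h' (a + 1 + 1))
          = π' (a + 1) * (K' (a + 1) (a + 1 + 1) * (h' (a + 1) - h' (a + 1 + 1))) := by ring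
        _ = π' (a + 1) * (1 + K' (a + 1) a * (h' a - h' (a + 1))) := by rw [key]
        _ = π' (a + 1) * K' (a + 1) a * (h' a - h' (a + 1)) + π' (a + 1) := by ring
        _ = π' a * K' a (a + 1) * (h' a - h' (a + 1)) + π' (a + 1) := by rw [hdb]
  -- telescoping
  have hzero : h' n = 0 := by
    rw [hh', vx_eq' h (le_refl n)]
    exact hlast
  have htel : h' 0 = ∑ a ∈ Finset.range n, (h' a - h' (a + 1)) := by
    rw [Finset.sum_range_sub' h' n, hzero, sub_zero]
  have h0 : h 0 = h' 0 := by
    rw [hh']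
    exact (vx_eq h 0).symm
  rw [h0, htel]
  have hstep : ∀ a ∈ Finset.range n, h' a - h' (a + 1) =
      (1 / (π' a * K' a (a + 1))) * ∑ k ∈ Finset.range (a + 1), π' k := by
    intro a ha'
    rw [Finset.mem_range] at ha'
    have hpos : 0 < π' a * K' a (a + 1) :=
      mul_pos (hπpos' a (le_of_lt ha')) (hbirth' a ha')
    field_simp
    rw [eq_div_iff hpos.ne']; linear_combination hd a ha'
  rw [Finset.sum_congr rfl hstep,
    ← Fin.sum_univ_eq_sum_range
      (fun a => (1 / (π' a * K' a (a + 1))) * ∑ k ∈ Finset.range (a + 1), π' k) n]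
  apply Finset.sum_congr rfl
  intro i _
  have hin : (i : ℕ) ≤ n := le_of_lt i.isLt
  have e1 : π' (i : ℕ) = π i.castSucc := by
    rw [hπ', vx_eq' π hin]
    exact congrArg π (Fin.ext rfl)
  have e2 : K' (i : ℕ) ((i : ℕ) + 1) = K i.castSucc i.succ := by
    rw [hK']
    unfold Kx
    rw [dif_pos ⟨hin, by omega⟩]
    exact congrArg₂ K (Fin.ext rfl) (Fin.ext rfl)
  have e3 : (∑ k ∈ Finset.range ((i : ℕ) + 1), π' k) =
      ∑ k ∈ Finset.univ.filter (fun k : Fin (n + 1) => (k : ℕ) ≤ (i : ℕ)), π k := by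
    rw [Finset.sum_filter]
    calc ∑ k ∈ Finset.range ((i : ℕ) + 1), π' k
        = ∑ k ∈ Finset.range ((i : ℕ) + 1), (if k ≤ (i : ℕ) then π' k else 0) :=
          Finset.sum_congr rfl fun x hx => by
            rw [Finset.mem_range] at hx
            rw [if_pos (by omega)]
      _ = ∑ k ∈ Finset.range (n + 1), (if k ≤ (i : ℕ) then π' k else 0) :=
          Finset.sum_subset (Finset.range_subset_range.mpr (by omega))
            (fun x hx hnx => by
              rw [Finset.mem_range] at hnx
              rw [if_neg (by omega)])
      _ = ∑ k ∈ Finset.range (n + 1),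
            vx (fun k : Fin (n + 1) => if (k : ℕ) ≤ (i : ℕ) then π k else 0) k := by
          refine Finset.sum_congr rfl fun b hb => ?_
          rw [Finset.mem_range] at hb
          rw [hπ']
          by_cases hbi : b ≤ (i : ℕ) <;> simp [vx, hbi, Nat.lt_succ_iff.mp hb]
      _ = ∑ k : Fin (n + 1), (if (k : ℕ) ≤ (i : ℕ) then π k else 0) := sum_vx _
  rw [e1, e2, e3]
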